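/- Let f : ℝ → ℝ be of class C^7 and fix x ∈ ℝ. Define, for h > 0, the corrected flux function G_h(y) := f(y) − (h²/24)·f''(y) + (7h⁴/5760)·f''''(y). Then the centered flux difference (G_h(x + h/2) − G_h(x − h/2))/h approximates f'(x) to sixth order: there exist constants C > 0 and δ > 0 such that for all 0 < h < δ, |(G_h(x + h/2) − G_h(x − h/2))/h − f'(x)| ≤ C·h⁶. -/

import Mathlib

open Set Finset

section AwenoAux

lemma my_cd_iter {f : ℝ → ℝ} {n k : ℕ} (hf : ContDiff ℝ (n + k : ℕ) f) :
    ContDiff ℝ n (iteratedDeriv k f) := by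
  rw [iteratedDeriv_eq_iterate]; exact ContDiff.iterate_deriv' n k hf

lemma my_iter_iter (f : ℝ → ℝ) (k j : ℕ) :
    iteratedDeriv k (iteratedDeriv j f) = iteratedDeriv (k + j) f := by
  simp [iteratedDeriv_eq_iterate, Function.iterate_add_apply]

lemma my_within_eq {f : ℝ → ℝ} {n : ℕ} (hf : ContDiff ℝ n f) {s : Set ℝ}
    (hs : UniqueDiffOn ℝ s) {m : ℕ} (hm : m ≤ n) {y : ℝ} (hy : y ∈ s) :
    iteratedDerivWithin m f s y = iteratedDeriv m f y := by
  rw [iteratedDerivWithin_eq_iteratedFDerivWithin, iteratedDeriv_eq_iteratedFDeriv]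
  congr 1
  exact (((contDiff_iff_ftaylorSeries.mp (by exact_mod_cast hf)).hasFTaylorSeriesUpToOn
    s).eq_iteratedFDerivWithin_of_uniqueDiffOn (by exact_mod_cast hm) hs hy).symm

lemma my_taylor_bound {F : ℝ → ℝ} (n : ℕ) (hF : ContDiff ℝ (n + 1 : ℕ) F) :
    ∃ C > (0:ℝ), ∀ h : ℝ, 0 < h → h < 1 →
      |F h - ∑ k ∈ Finset.range (n + 1), h ^ k / (Nat.factorial k) * iteratedDeriv k F 0|
        ≤ C * h ^ (n + 1) := by
  obtain ⟨M, hM⟩ := (isCompact_Icc (a := (0:ℝ)) (b := 1)).exists_bound_of_continuousOn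
    ((hF.continuous_iteratedDeriv (n+1) (by exact_mod_cast le_rfl)).continuousOn)
  refine ⟨(|M| + 1) / (Nat.factorial (n+1)), by positivity, fun h hh h1 => ?_⟩
  have hud : UniqueDiffOn ℝ (Icc (0:ℝ) h) := uniqueDiffOn_Icc hh
  have hFn : ContDiff ℝ (n : ℕ) F := hF.of_le (by exact_mod_cast Nat.le_succ n)
  obtain ⟨ξ, hξ, heq⟩ := taylor_mean_remainder_lagrange (f := F) (x₀ := 0) (x := h) hh.ne
    (hFn.contDiffOn)
    (by
      rw [Set.uIcc_of_le hh.le, Set.uIoo_of_le hh.le]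
      apply DifferentiableOn.congr (f := iteratedDeriv n F)
      · exact ((hF.differentiable_iteratedDeriv n
          (by exact_mod_cast Nat.lt_succ_self n)).differentiableOn)
      · intro y hy
        exact my_within_eq hFn hud le_rfl (Ioo_subset_Icc_self hy))
  rw [Set.uIcc_of_le hh.le] at heq; rw [Set.uIoo_of_le hh.le] at hξ
  have htay : taylorWithinEval F n (Icc 0 h) 0 h
      = ∑ k ∈ Finset.range (n + 1), h ^ k / (Nat.factorial k) * iteratedDeriv k F 0 := by
    rw [taylor_within_apply]
    refine Finset.sum_congr rfl fun k hk => ?_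
    rw [my_within_eq hFn hud (Nat.lt_succ_iff.mp (Finset.mem_range.mp hk))
      (left_mem_Icc.mpr hh.le)]
    simp only [smul_eq_mul, sub_zero]
    ring
  rw [← htay, heq, my_within_eq hF hud le_rfl (Ioo_subset_Icc_self hξ)]
  rw [abs_div, abs_mul, abs_of_nonneg (pow_nonneg (by linarith [hξ.1] : (0:ℝ) ≤ h - 0) _)]
  have hMξ : |iteratedDeriv (n+1) F ξ| ≤ |M| := by
    have := hM ξ ⟨hξ.1.le, by linarith [hξ.2]⟩
    calc |iteratedDeriv (n+1) F ξ| ≤ M := by simpa [Real.norm_eq_abs] using this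
      _ ≤ |M| := le_abs_self M
  have hfac : (0:ℝ) < (Nat.factorial (n+1)) := by positivity
  rw [div_le_iff₀ (by positivity), abs_of_nonneg (le_of_lt hfac)]
  calc |iteratedDeriv (n+1) F ξ| * (h - 0) ^ (n+1) ≤ (|M|+1) * h ^ (n+1) := by
        rw [sub_zero]
        exact mul_le_mul (by linarith) le_rfl (by positivity) (by positivity)
    _ = (|M| + 1) / (Nat.factorial (n+1)) * h ^ (n+1) * (Nat.factorial (n+1)) := by
        field_simp

lemma my_iteratedDeriv_sub {f g : ℝ → ℝ} {n : ℕ} (hf : ContDiff ℝ n f) (hg : ContDiff ℝ n g)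
    (k : ℕ) (hk : k ≤ n) (y : ℝ) :
    iteratedDeriv k (fun z => f z - g z) y = iteratedDeriv k f y - iteratedDeriv k g y := by
  have := iteratedDerivWithin_sub (𝕜 := ℝ) (n := k) (s := (Set.univ : Set ℝ))
    (Set.mem_univ y) uniqueDiffOn_univ
    ((hf.of_le (by exact_mod_cast hk)).contDiffWithinAt) ((hg.of_le (by exact_mod_cast hk)).contDiffWithinAt)
  simpa [iteratedDerivWithin_univ, Pi.sub_def] using this

lemma my_W_deriv {u : ℝ → ℝ} {n : ℕ} (hu : ContDiff ℝ n u) (x : ℝ) (k : ℕ) (hk : k ≤ n) :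
    iteratedDeriv k (fun h : ℝ => u (x + h / 2) - u (x - h / 2)) 0
      = ((1/2 : ℝ) ^ k - (-(1/2) : ℝ) ^ k) * iteratedDeriv k u x := by
  have hg : ContDiff ℝ k (fun z : ℝ => u (x + z)) :=
    (hu.of_le (by exact_mod_cast hk)).comp (contDiff_const.add contDiff_id)
  have e1 : (fun h : ℝ => u (x + h / 2)) = fun h : ℝ => (fun z : ℝ => u (x + z)) ((1/2 : ℝ) * h) := by
    funext h; ring_nf
  have e2 : (fun h : ℝ => u (x - h / 2)) = fun h : ℝ => (fun z : ℝ => u (x + z)) ((-(1/2) : ℝ) * h) := by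
    funext h; ring_nf
  have hkk : ContDiff ℝ k u := hu.of_le (by exact_mod_cast hk)
  have d1 : iteratedDeriv k (fun h : ℝ => u (x + h / 2)) 0 = (1/2 : ℝ) ^ k * iteratedDeriv k u x := by
    rw [e1, iteratedDeriv_comp_const_mul hg (1/2 : ℝ)]
    simp [iteratedDeriv_comp_const_add]
  have d2 : iteratedDeriv k (fun h : ℝ => u (x - h / 2)) 0
      = (-(1/2) : ℝ) ^ k * iteratedDeriv k u x := by
    rw [e2, iteratedDeriv_comp_const_mul hg (-(1/2) : ℝ)]
    simp [iteratedDeriv_comp_const_add]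
  have hc1 : ContDiff ℝ k (fun h : ℝ => u (x + h / 2)) :=
    hkk.comp (contDiff_const.add (contDiff_id.div_const 2))
  have hc2 : ContDiff ℝ k (fun h : ℝ => u (x - h / 2)) :=
    hkk.comp (contDiff_const.sub (contDiff_id.div_const 2))
  rw [my_iteratedDeriv_sub hc1 hc2 k le_rfl 0, d1, d2, sub_mul]

/-- The centered-difference estimate for a `C^{n+1}` function `u`. -/
lemma my_centered_bound {u : ℝ → ℝ} (n : ℕ) (hu : ContDiff ℝ (n + 1 : ℕ) u) (x : ℝ) :
    ∃ C > (0:ℝ), ∀ h : ℝ, 0 < h → h < 1 →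
      |(u (x + h / 2) - u (x - h / 2))
        - ∑ k ∈ Finset.range (n + 1),
            h ^ k / (Nat.factorial k) * (((1/2 : ℝ) ^ k - (-(1/2) : ℝ) ^ k) * iteratedDeriv k u x)|
        ≤ C * h ^ (n + 1) := by
  have hF : ContDiff ℝ (n + 1 : ℕ) (fun h : ℝ => u (x + h / 2) - u (x - h / 2)) :=
    (hu.comp (contDiff_const.add (contDiff_id.div_const 2))).sub
      (hu.comp (contDiff_const.sub (contDiff_id.div_const 2)))
  obtain ⟨C, hC, hbound⟩ := my_taylor_bound n hF
  refine ⟨C, hC, fun h hh h1 => ?_⟩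
  have := hbound h hh h1
  have hsum : ∀ k ∈ Finset.range (n+1),
      h ^ k / (Nat.factorial k) * iteratedDeriv k (fun h : ℝ => u (x + h / 2) - u (x - h / 2)) 0
      = h ^ k / (Nat.factorial k) * (((1/2 : ℝ) ^ k - (-(1/2) : ℝ) ^ k) * iteratedDeriv k u x) := by
    intro k hk
    rw [my_W_deriv hu x k (le_of_lt (Finset.mem_range.mp hk))]
  rwa [Finset.sum_congr rfl hsum] at this

end AwenoAux

/-- The corrected flux `G_h(y) = f(y) - (h²/24) f''(y) + (7h⁴/5760) f''''(y)` yields a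
centered flux difference approximating `f'(x)` to sixth order. -/
theorem aweno_corrected_flux_sixth_order
    (f : ℝ → ℝ) (hf : ContDiff ℝ 7 f) (x : ℝ) :
    ∃ C > (0 : ℝ), ∃ δ > (0 : ℝ), ∀ h : ℝ, 0 < h → h < δ →
      |((fun y => f y - h ^ 2 / 24 * iteratedDeriv 2 f y
            + 7 * h ^ 4 / 5760 * iteratedDeriv 4 f y) (x + h / 2)
        - (fun y => f y - h ^ 2 / 24 * iteratedDeriv 2 f y
            + 7 * h ^ 4 / 5760 * iteratedDeriv 4 f y) (x - h / 2)) / h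
        - deriv f x| ≤ C * h ^ 6 := by
  have hf7 : ContDiff ℝ (7 : ℕ) f := by exact_mod_cast hf
  have hf2 : ContDiff ℝ (5 : ℕ) (iteratedDeriv 2 f) := my_cd_iter (n := 5) (k := 2) hf7
  have hf4 : ContDiff ℝ (3 : ℕ) (iteratedDeriv 4 f) := my_cd_iter (n := 3) (k := 4) hf7
  obtain ⟨C₁, hC₁, hb₁⟩ := my_centered_bound 6 (by exact_mod_cast hf7) x
  obtain ⟨C₂, hC₂, hb₂⟩ := my_centered_bound 4 (by exact_mod_cast hf2) x
  obtain ⟨C₃, hC₃, hb₃⟩ := my_centered_bound 2 (by exact_mod_cast hf4) x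
  refine ⟨C₁ + C₂ / 24 + 7 * C₃ / 5760, by positivity, 1, one_pos, fun h hh h1 => ?_⟩
  have e₁ := hb₁ h hh h1
  have e₂ := hb₂ h hh h1
  have e₃ := hb₃ h hh h1
  have s₁ : ∑ k ∈ Finset.range (6 + 1),
      h ^ k / (Nat.factorial k) * (((1/2 : ℝ) ^ k - (-(1/2) : ℝ) ^ k) * iteratedDeriv k f x)
      = h * deriv f x + h ^ 3 / 24 * iteratedDeriv 3 f x + h ^ 5 / 1920 * iteratedDeriv 5 f x := by
    simp [Finset.sum_range_succ, Nat.factorial]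
    ring
  have s₂ : ∑ k ∈ Finset.range (4 + 1),
      h ^ k / (Nat.factorial k) * (((1/2 : ℝ) ^ k - (-(1/2) : ℝ) ^ k)
        * iteratedDeriv k (iteratedDeriv 2 f) x)
      = h * iteratedDeriv 3 f x + h ^ 3 / 24 * iteratedDeriv 5 f x := by
    simp [Finset.sum_range_succ, Nat.factorial, my_iter_iter]
    ring
  have s₃ : ∑ k ∈ Finset.range (2 + 1),
      h ^ k / (Nat.factorial k) * (((1/2 : ℝ) ^ k - (-(1/2) : ℝ) ^ k)
        * iteratedDeriv k (iteratedDeriv 4 f) x)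
      = h * iteratedDeriv 5 f x := by
    simp [Finset.sum_range_succ, Nat.factorial, my_iter_iter]
    exact Or.inl (by ring)
  rw [s₁] at e₁; rw [s₂] at e₂; rw [s₃] at e₃
  set E₁ := (f (x + h / 2) - f (x - h / 2)) - (h * deriv f x + h ^ 3 / 24 * iteratedDeriv 3 f x
    + h ^ 5 / 1920 * iteratedDeriv 5 f x) with hE₁
  set E₂ := (iteratedDeriv 2 f (x + h / 2) - iteratedDeriv 2 f (x - h / 2))
    - (h * iteratedDeriv 3 f x + h ^ 3 / 24 * iteratedDeriv 5 f x) with hE₂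
  set E₃ := (iteratedDeriv 4 f (x + h / 2) - iteratedDeriv 4 f (x - h / 2))
    - h * iteratedDeriv 5 f x with hE₃
  have key : ((f (x + h/2) - h ^ 2 / 24 * iteratedDeriv 2 f (x + h/2)
        + 7 * h ^ 4 / 5760 * iteratedDeriv 4 f (x + h/2))
      - (f (x - h/2) - h ^ 2 / 24 * iteratedDeriv 2 f (x - h/2)
        + 7 * h ^ 4 / 5760 * iteratedDeriv 4 f (x - h/2))) / h - deriv f x
      = (E₁ - h ^ 2 / 24 * E₂ + 7 * h ^ 4 / 5760 * E₃) / h := by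
    rw [hE₁, hE₂, hE₃]
    field_simp
    ring
  simp only []
  rw [key]
  rw [abs_div, abs_of_pos hh, div_le_iff₀ hh]
  have tri : |E₁ - h ^ 2 / 24 * E₂ + 7 * h ^ 4 / 5760 * E₃|
      ≤ |E₁| + h ^ 2 / 24 * |E₂| + 7 * h ^ 4 / 5760 * |E₃| := by
    have t1 : |E₁ - h ^ 2 / 24 * E₂ + 7 * h ^ 4 / 5760 * E₃|
        ≤ |E₁ - h ^ 2 / 24 * E₂| + |7 * h ^ 4 / 5760 * E₃| := abs_add_le _ _
    have t2 : |E₁ - h ^ 2 / 24 * E₂| ≤ |E₁| + |h ^ 2 / 24 * E₂| := abs_sub _ _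
    have t3 : |h ^ 2 / 24 * E₂| = h ^ 2 / 24 * |E₂| := by
      rw [abs_mul, abs_of_pos (by positivity : (0:ℝ) < h ^ 2 / 24)]
    have t4 : |7 * h ^ 4 / 5760 * E₃| = 7 * h ^ 4 / 5760 * |E₃| := by
      rw [abs_mul, abs_of_pos (by positivity : (0:ℝ) < 7 * h ^ 4 / 5760)]
    linarith
  calc |E₁ - h ^ 2 / 24 * E₂ + 7 * h ^ 4 / 5760 * E₃|
      ≤ |E₁| + h ^ 2 / 24 * |E₂| + 7 * h ^ 4 / 5760 * |E₃| := tri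
    _ ≤ C₁ * h ^ (6+1) + h ^ 2 / 24 * (C₂ * h ^ (4+1)) + 7 * h ^ 4 / 5760 * (C₃ * h ^ (2+1)) := by
        gcongr
    _ = (C₁ + C₂ / 24 + 7 * C₃ / 5760) * h ^ 6 * h := by ring
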